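/- For 0 < |α| ≤ 1 and any positive integer n, |α|^{S(n)} ≤ n^{(3/log 3)·log|α|}. -/

import Mathlib

def S (n : ℕ) : ℕ := n.factorization.sum fun p k => k * p

lemma one_lt_log_three : 1 < Real.log 3 := by
  rw [Real.lt_log_iff_exp_lt (by norm_num)]
  calc Real.exp 1 < 2.7182818286 := Real.exp_one_lt_d9
    _ < 3 := by norm_num

lemma prime_log_ineq {p : ℕ} (hp : p.Prime) :
    3 * Real.log p ≤ (p : ℝ) * Real.log 3 := by
  rcases eq_or_ne p 2 with rfl | h2
  · have h : Real.log 8 ≤ Real.log 9 := Real.log_le_log (by norm_num) (by norm_num)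
    have h8 : (8 : ℝ) = 2 ^ 3 := by norm_num
    have h9 : (9 : ℝ) = 3 ^ 2 := by norm_num
    rw [h8, h9, Real.log_pow, Real.log_pow] at h
    push_cast at h ⊢
    linarith
  · have hp3 : (3 : ℝ) ≤ p := by
      have := hp.two_le
      have : p ≠ 2 := h2
      have h3 : 3 ≤ p := by omega
      exact_mod_cast h3
    have hppos : (0 : ℝ) < p := by linarith
    have hlog : Real.log ((p : ℝ) / 3) ≤ (p : ℝ) / 3 - 1 :=
      Real.log_le_sub_one_of_pos (by positivity)
    rw [Real.log_div (by positivity) (by norm_num)] at hlog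
    have hl3 := one_lt_log_three
    nlinarith [hlog, hl3, hp3]

lemma S_mul {a b : ℕ} (ha : a ≠ 0) (hb : b ≠ 0) : S (a * b) = S a + S b := by
  unfold S
  rw [Nat.factorization_mul ha hb]
  exact Finsupp.sum_add_index (by intros; simp) (by intros; ring)

lemma S_prime {p : ℕ} (hp : p.Prime) : S p = p := by
  unfold S
  rw [hp.factorization]
  simp [Finsupp.sum_single_index]

lemma key : ∀ n : ℕ, 0 < n → 3 * Real.log n ≤ (S n : ℝ) * Real.log 3 := by
  intro n
  induction n using Nat.strong_induction_on with
  | _ n ih =>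
    intro hn
    rcases eq_or_lt_of_le (by omega : 1 ≤ n) with h1 | h2
    · simp [← h1, S]
    · -- n ≥ 2
      have hn2 : 2 ≤ n := h2
      set p := n.minFac with hp
      have hpp : p.Prime := Nat.minFac_prime (by omega)
      have hpd : p ∣ n := Nat.minFac_dvd n
      obtain ⟨m, hm⟩ := hpd
      have hm0 : 0 < m := by
        rcases Nat.eq_zero_or_pos m with h | h
        · simp [h] at hm; omega
        · exact h
      have hmn : m < n := by
        have := hpp.two_le
        calc m < 2 * m := by omega
          _ ≤ p * m := by exact Nat.mul_le_mul_right m this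
          _ = n := hm.symm
      have hSm := ih m hmn hm0
      have hSn : S n = p + S m := by
        rw [hm, S_mul (Nat.Prime.ne_zero hpp) (by omega), S_prime hpp]
      have hlogn : Real.log n = Real.log p + Real.log m := by
        rw [hm]
        push_cast
        exact Real.log_mul (by exact_mod_cast hpp.pos.ne') (by exact_mod_cast hm0.ne')
      have hplog := prime_log_ineq hpp
      rw [hSn, hlogn]
      push_cast
      linarith

theorem alpha_pow_S_le (α : ℂ) (hα0 : 0 < ‖α‖) (hα1 : ‖α‖ ≤ 1) (n : ℕ) (hn : 0 < n) :
    ‖α‖ ^ S n ≤ (n : ℝ) ^ ((3 / Real.log 3) * Real.log ‖α‖) := by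
  have hL : Real.log ‖α‖ ≤ 0 := Real.log_nonpos (le_of_lt hα0) hα1
  have hnpos : (0 : ℝ) < n := by exact_mod_cast hn
  have hl3 : 0 < Real.log 3 := by linarith [one_lt_log_three]
  have hkey := key n hn
  -- (3/log3) * log n ≤ S n
  have h1 : (3 / Real.log 3) * Real.log n ≤ (S n : ℝ) := by
    rw [div_mul_eq_mul_div, div_le_iff₀ hl3]
    linarith
  have h2 : (S n : ℝ) * Real.log ‖α‖ ≤ (3 / Real.log 3) * Real.log n * Real.log ‖α‖ :=
    mul_le_mul_of_nonpos_right h1 hL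
  calc ‖α‖ ^ S n = Real.exp ((S n : ℝ) * Real.log ‖α‖) := by
        rw [← Real.rpow_natCast, Real.rpow_def_of_pos hα0, mul_comm]
    _ ≤ Real.exp ((3 / Real.log 3) * Real.log n * Real.log ‖α‖) := Real.exp_le_exp.mpr h2
    _ = (n : ℝ) ^ ((3 / Real.log 3) * Real.log ‖α‖) := by
        rw [Real.rpow_def_of_pos hnpos]
        ring_nf
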